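/- For any two positive semidefinite operators A, B on a finite-dimensional Hilbert space, ‖A − B‖₁ ≥ ‖√A − √B‖₂², where ‖·‖₁ is the trace norm and ‖·‖₂ is the Hilbert–Schmidt (Frobenius) norm. -/

import Mathlib

open Matrix
open scoped Kronecker ComplexOrder

noncomputable section

def mfun {n : Type*} [Fintype n] [DecidableEq n] (f : ℝ → ℝ) (A : Matrix n n ℂ) : Matrix n n ℂ :=
  if h : A.IsHermitian then
    h.eigenvectorUnitary.1 * Matrix.diagonal (fun i => (f (h.eigenvalues i) : ℂ)) *
      (star h.eigenvectorUnitary.1)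
  else 0

def psqrt {n : Type*} [Fintype n] [DecidableEq n] (A : Matrix n n ℂ) : Matrix n n ℂ :=
  mfun Real.sqrt A

def mlog {n : Type*} [Fintype n] [DecidableEq n] (A : Matrix n n ℂ) : Matrix n n ℂ :=
  mfun Real.log A

def traceNorm {n : Type*} [Fintype n] [DecidableEq n] (A : Matrix n n ℂ) : ℝ :=
  ((psqrt (Aᴴ * A)).trace).re

def fid {n : Type*} [Fintype n] [DecidableEq n] (ρ σ : Matrix n n ℂ) : ℝ :=
  traceNorm (psqrt ρ * psqrt σ)

def vNEntropy {n : Type*} [Fintype n] [DecidableEq n] (A : Matrix n n ℂ) : ℝ :=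
  - ((A * mlog A).trace).re

def relEnt {n : Type*} [Fintype n] [DecidableEq n] (ρ σ : Matrix n n ℂ) : ℝ :=
  ((ρ * mlog ρ).trace - (ρ * mlog σ).trace).re


section Helpers
variable {n : Type*} [Fintype n] [DecidableEq n]

open scoped MatrixOrder in
def Matrix.PosSemidef.sqrt {A : Matrix n n ℂ} (_hA : A.PosSemidef) : Matrix n n ℂ := CFC.sqrt A

open scoped MatrixOrder in
lemma Matrix.PosSemidef.posSemidef_sqrt {A : Matrix n n ℂ} (hA : A.PosSemidef) :
    hA.sqrt.PosSemidef :=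
  Matrix.nonneg_iff_posSemidef.mp (CFC.sqrt_nonneg A)

open scoped MatrixOrder in
lemma Matrix.PosSemidef.sqrt_mul_self {A : Matrix n n ℂ} (hA : A.PosSemidef) :
    hA.sqrt * hA.sqrt = A :=
  CFC.sqrt_mul_sqrt_self A (Matrix.nonneg_iff_posSemidef.mpr hA)

open scoped MatrixOrder in
lemma Matrix.PosSemidef.eq_sqrt_of_sq_eq {R A : Matrix n n ℂ} (hR : R.PosSemidef)
    (hA : A.PosSemidef) (h : R ^ 2 = A) : R = hA.sqrt :=
  (CFC.sqrt_unique (by rw [← sq]; exact h) (Matrix.nonneg_iff_posSemidef.mpr hR)).symm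

lemma Matrix.IsHermitian.star_mul_self_mul_eq_diagonal {A : Matrix n n ℂ} (hA : A.IsHermitian) :
    star hA.eigenvectorUnitary.1 * A * hA.eigenvectorUnitary.1
      = Matrix.diagonal (RCLike.ofReal ∘ hA.eigenvalues) := by
  have := hA.conjStarAlgAut_star_eigenvectorUnitary
  simpa using this

open scoped MatrixOrder in
lemma psqrt_eq {A : Matrix n n ℂ} (hA : A.PosSemidef) : psqrt A = hA.sqrt := by
  rw [psqrt, mfun, dif_pos hA.1, Matrix.PosSemidef.sqrt,
    CFC.sqrt_eq_real_sqrt A (Matrix.nonneg_iff_posSemidef.mpr hA), cfcₙ_eq_cfc, hA.1.cfc_eq,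
    IsHermitian.cfc, Unitary.conjStarAlgAut_apply]
  rfl

-- diagonal entries of PSD matrix
lemma psd_diag {M : Matrix n n ℂ} (hM : M.PosSemidef) (i : n) :
    0 ≤ (M i i).re ∧ (M i i).im = 0 := by
  have h := hM.dotProduct_mulVec_nonneg (Pi.single i 1)
  have he : star (Pi.single i 1) ⬝ᵥ M *ᵥ (Pi.single i 1 : n → ℂ) = M i i := by
    simp [Matrix.mulVec_single, dotProduct, Pi.single_apply, Finset.sum_ite_eq']
  rw [he] at h
  rw [Complex.le_def] at h
  exact ⟨by simpa using h.1, by simpa using h.2.symm⟩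

-- trace of unitary conjugation of diagonal
lemma trace_conj_diag (U : Matrix.unitaryGroup n ℂ) (f : n → ℂ) :
    (U.1 * Matrix.diagonal f * star U.1).trace = ∑ i, f i := by
  rw [Matrix.trace_mul_cycle]
  have : star U.1 * U.1 = 1 := Unitary.coe_star_mul_self U
  rw [this, Matrix.one_mul, Matrix.trace_diagonal]


lemma conj_diag_sq (V : Matrix.unitaryGroup n ℂ) (f : n → ℂ) :
    (V.1 * Matrix.diagonal f * star V.1) * (V.1 * Matrix.diagonal f * star V.1)
      = V.1 * Matrix.diagonal (fun i => f i * f i) * star V.1 := by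
  have h1 : star V.1 * V.1 = 1 := Unitary.coe_star_mul_self V
  calc V.1 * Matrix.diagonal f * star V.1 * (V.1 * Matrix.diagonal f * star V.1)
      = V.1 * Matrix.diagonal f * (star V.1 * V.1) * Matrix.diagonal f * star V.1 := by
        simp only [Matrix.mul_assoc]
    _ = V.1 * (Matrix.diagonal f * Matrix.diagonal f) * star V.1 := by
        rw [h1]; simp only [Matrix.mul_assoc, Matrix.mul_one]
    _ = _ := by rw [Matrix.diagonal_mul_diagonal]

lemma traceNorm_hermitian {X : Matrix n n ℂ} (hX : X.IsHermitian) :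
    traceNorm X = ∑ j, |hX.eigenvalues j| := by
  have hXX : (Xᴴ * X).PosSemidef := Matrix.posSemidef_conjTranspose_mul_self X
  set V := hX.eigenvectorUnitary
  set μ := hX.eigenvalues
  set R := V.1 * Matrix.diagonal (fun j => (Complex.ofReal |μ j|)) * star V.1 with hRdef
  have hRpsd : R.PosSemidef := by
    rw [hRdef]
    have : (star V.1 : Matrix n n ℂ) = (V.1)ᴴ := rfl
    rw [this]
    exact Matrix.PosSemidef.mul_mul_conjTranspose_same
      (Matrix.posSemidef_diagonal_iff.mpr fun j => by
        rw [Complex.le_def]; constructor <;> simp [abs_nonneg]) V.1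
  have hRsq : R ^ 2 = Xᴴ * X := by
    rw [pow_two, hRdef, conj_diag_sq]
    have hs : X = V.1 * Matrix.diagonal (RCLike.ofReal ∘ μ) * star V.1 := hX.spectral_theorem
    rw [hX.eq, hs, conj_diag_sq]
    have hf : (fun i => Complex.ofReal |μ i| * Complex.ofReal |μ i|)
        = fun i => (RCLike.ofReal ∘ μ) i * (RCLike.ofReal ∘ μ) i := by
      funext i
      rw [← Complex.ofReal_mul, abs_mul_abs_self]
      simp [RCLike.ofReal]
    rw [hf]
  have hReq : R = hXX.sqrt := hRpsd.eq_sqrt_of_sq_eq hXX hRsq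
  rw [traceNorm, psqrt_eq hXX, ← hReq, hRdef, trace_conj_diag]
  rw [Complex.re_sum]
  simp

lemma diag_abs_le {X : Matrix n n ℂ} (hX : X.IsHermitian) (U : Matrix.unitaryGroup n ℂ) :
    ∑ i, |((star U.1 * X * U.1) i i).re| ≤ ∑ j, |hX.eigenvalues j| := by
  set V := hX.eigenvectorUnitary
  set μ := hX.eigenvalues
  set W : Matrix n n ℂ := star U.1 * V.1 with hW
  have hWsW : star W * W = 1 := by
    rw [hW, Matrix.star_mul, star_star]
    calc star V.1 * U.1 * (star U.1 * V.1)
        = star V.1 * (U.1 * star U.1) * V.1 := by simp only [Matrix.mul_assoc]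
      _ = star V.1 * V.1 := by rw [U.2.2, Matrix.mul_one]
      _ = 1 := V.2.1
  have key : star U.1 * X * U.1 = W * Matrix.diagonal (RCLike.ofReal ∘ μ) * star W := by
    rw [hX.spectral_theorem, Unitary.conjStarAlgAut_apply, hW, Matrix.star_mul, star_star]
    simp only [Matrix.mul_assoc]
    rfl
  have entry : ∀ i, ((star U.1 * X * U.1) i i).re
      = ∑ j, μ j * Complex.normSq (W i j) := by
    intro i
    rw [key, Matrix.mul_apply, Complex.re_sum]
    congr 1
    funext j
    rw [Matrix.mul_diagonal]
    have : (star W) j i = starRingEnd ℂ (W i j) := rfl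
    rw [this]
    have : W i j * (RCLike.ofReal ∘ μ) j * starRingEnd ℂ (W i j)
        = (μ j : ℂ) * (W i j * starRingEnd ℂ (W i j)) := by
      simp [RCLike.ofReal]; ring
    rw [this, Complex.mul_conj]
    push_cast
    simp
  have col : ∀ j, ∑ i, Complex.normSq (W i j) = 1 := by
    intro j
    have h := congrFun (congrFun hWsW j) j
    rw [Matrix.mul_apply] at h
    have h2 : ∑ i, ((star W) j i * W i j) = 1 := by
      rw [h]; simp [Matrix.one_apply]
    have h3 : ∀ i, (star W) j i * W i j = (Complex.normSq (W i j) : ℂ) := by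
      intro i
      have : (star W) j i = starRingEnd ℂ (W i j) := rfl
      rw [this, mul_comm, Complex.mul_conj]
    rw [Finset.sum_congr rfl (fun i _ => h3 i)] at h2
    exact_mod_cast h2
  calc ∑ i, |((star U.1 * X * U.1) i i).re|
      ≤ ∑ i, ∑ j, |μ j| * Complex.normSq (W i j) := by
        apply Finset.sum_le_sum
        intro i _
        rw [entry i]
        refine (Finset.abs_sum_le_sum_abs _ _).trans ?_
        apply Finset.sum_le_sum
        intro j _
        rw [abs_mul, abs_of_nonneg (Complex.normSq_nonneg _)]
    _ = ∑ j, |μ j| * ∑ i, Complex.normSq (W i j) := by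
        rw [Finset.sum_comm]
        simp [Finset.mul_sum]
    _ = ∑ j, |μ j| := by simp [col]


end Helpers

/-- For PSD A, B: `‖A − B‖₁ ≥ ‖√A − √B‖₂²`. -/
theorem stmt1 {n : Type*} [Fintype n] [DecidableEq n]
    (A B : Matrix n n ℂ) (hA : A.PosSemidef) (hB : B.PosSemidef) :
    Real.sqrt ((((psqrt A - psqrt B)ᴴ * (psqrt A - psqrt B)).trace).re) ^ 2
      ≤ traceNorm (A - B) := by
  set P := psqrt A with hPdef
  set Q := psqrt B with hQdef
  have hP : P.PosSemidef := by rw [hPdef, psqrt_eq hA]; exact hA.posSemidef_sqrt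
  have hQ : Q.PosSemidef := by rw [hQdef, psqrt_eq hB]; exact hB.posSemidef_sqrt
  have hP2 : P * P = A := by rw [hPdef, psqrt_eq hA]; exact hA.sqrt_mul_self
  have hQ2 : Q * Q = B := by rw [hQdef, psqrt_eq hB]; exact hB.sqrt_mul_self
  set D := P - Q with hDdef
  set S := P + Q with hSdef
  set X := A - B with hXdef
  have hD : D.IsHermitian := hP.1.sub hQ.1
  have hX : X.IsHermitian := hA.1.sub hB.1
  set U := hD.eigenvectorUnitary with hUdef
  set d := hD.eigenvalues with hddef
  have hUU : U.1 * star U.1 = 1 := U.2.2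
  have hdiag : star U.1 * D * U.1 = Matrix.diagonal (RCLike.ofReal ∘ d) :=
    hD.star_mul_self_mul_eq_diagonal
  -- LHS = ∑ d i ^ 2
  have hLHS : ((Dᴴ * D).trace).re = ∑ i, d i ^ 2 := by
    rw [hD.eq, hD.spectral_theorem, Unitary.conjStarAlgAut_apply, conj_diag_sq, trace_conj_diag, Complex.re_sum]
    congr 1
    funext i
    have : (RCLike.ofReal ∘ d) i * (RCLike.ofReal ∘ d) i = ((d i * d i : ℝ) : ℂ) := by
      push_cast; rfl
    rw [this]
    simp [sq]
  set S' := star U.1 * S * U.1 with hS'def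
  have conjPSD : ∀ {M : Matrix n n ℂ}, M.PosSemidef → (star U.1 * M * U.1).PosSemidef := by
    intro M hM
    have h := hM.mul_mul_conjTranspose_same (star U.1)
    rwa [Matrix.star_eq_conjTranspose, Matrix.conjTranspose_conjTranspose] at h
  -- diagonal entries of S' dominate |d i|
  have hSd : ∀ i, |d i| ≤ (S' i i).re := by
    intro i
    have hplus : (S + D).PosSemidef := by
      have : S + D = P + P := by rw [hSdef, hDdef]; abel
      rw [this]; exact hP.add hP
    have hminus : (S - D).PosSemidef := by
      have : S - D = Q + Q := by rw [hSdef, hDdef]; abel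
      rw [this]; exact hQ.add hQ
    have h1 := (psd_diag (conjPSD hplus) i).1
    have h2 := (psd_diag (conjPSD hminus) i).1
    have e1 : star U.1 * (S + D) * U.1 = S' + Matrix.diagonal (RCLike.ofReal ∘ d) := by
      rw [← hdiag, hS'def]
      simp [Matrix.mul_add, Matrix.add_mul]
    have e2 : star U.1 * (S - D) * U.1 = S' - Matrix.diagonal (RCLike.ofReal ∘ d) := by
      rw [← hdiag, hS'def]
      simp [Matrix.mul_sub, Matrix.sub_mul]
    rw [e1] at h1
    rw [e2] at h2
    simp only [Matrix.add_apply, Matrix.sub_apply, Matrix.diagonal_apply_eq,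
      Complex.add_re, Complex.sub_re] at h1 h2
    have hdre : ((RCLike.ofReal ∘ d) i : ℂ).re = d i := by simp [RCLike.ofReal]
    rw [hdre] at h1 h2
    rw [abs_le]
    constructor <;> linarith
  -- X' diagonal entries
  have hX' : ∀ i, ((star U.1 * X * U.1) i i).re = d i * (S' i i).re := by
    intro i
    have h2X : X + X = D * S + S * D := by
      rw [hXdef, hDdef, hSdef, ← hP2, ← hQ2]
      noncomm_ring
    have e : star U.1 * (X + X) * U.1
        = Matrix.diagonal (RCLike.ofReal ∘ d) * S' + S' * Matrix.diagonal (RCLike.ofReal ∘ d) := by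
      rw [h2X, Matrix.mul_add, Matrix.add_mul, ← hdiag, hS'def]
      refine congrArg₂ (· + ·) ?_ ?_
      · calc star U.1 * (D * S) * U.1 = star U.1 * D * (U.1 * star U.1) * S * U.1 := by
              rw [hUU]; simp only [Matrix.mul_assoc, Matrix.mul_one, Matrix.one_mul]
          _ = star U.1 * D * U.1 * (star U.1 * S * U.1) := by simp only [Matrix.mul_assoc]
      · calc star U.1 * (S * D) * U.1 = star U.1 * S * (U.1 * star U.1) * D * U.1 := by
              rw [hUU]; simp only [Matrix.mul_assoc, Matrix.mul_one, Matrix.one_mul]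
          _ = star U.1 * S * U.1 * (star U.1 * D * U.1) := by simp only [Matrix.mul_assoc]
    have e2 : star U.1 * (X + X) * U.1
        = star U.1 * X * U.1 + star U.1 * X * U.1 := by
      simp [Matrix.mul_add, Matrix.add_mul]
    rw [e2] at e
    have := congrFun (congrFun e i) i
    simp only [Matrix.add_apply, Matrix.diagonal_mul, Matrix.mul_diagonal] at this
    have hre := congrArg Complex.re this
    simp only [Complex.add_re] at hre
    have hd : ((RCLike.ofReal ∘ d) i : ℂ) = ((d i : ℝ) : ℂ) := rfl
    rw [hd] at hre
    rw [Complex.re_ofReal_mul, mul_comm (S' i i) _, Complex.re_ofReal_mul] at hre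
    linarith
  -- assemble
  have key : ∑ i, d i ^ 2 ≤ traceNorm X := by
    calc ∑ i, d i ^ 2 ≤ ∑ i, |((star U.1 * X * U.1) i i).re| := by
          apply Finset.sum_le_sum
          intro i _
          rw [hX' i, abs_mul]
          rw [abs_of_nonneg (le_trans (abs_nonneg _) (hSd i))]
          rw [sq]
          rcases eq_or_ne (d i) 0 with h | h
          · simp [h]
          · calc d i * d i ≤ |d i| * |d i| := by
                  rw [← abs_mul_self (d i)]; exact le_of_eq (by rw [abs_mul])
              _ ≤ |d i| * (S' i i).re := by
                  exact mul_le_mul_of_nonneg_left (hSd i) (abs_nonneg _)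
      _ ≤ ∑ j, |hX.eigenvalues j| := diag_abs_le hX U
      _ = traceNorm X := (traceNorm_hermitian hX).symm
  have hnn : 0 ≤ ((Dᴴ * D).trace).re := by
    rw [hLHS]
    exact Finset.sum_nonneg fun i _ => sq_nonneg _
  rw [Real.sq_sqrt hnn, hLHS]
  exact key
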